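/- (Exchange Dirichlet bound for invariant measures, corollary of Lemma 3.4 and identity (eq)) Let μ be a Γ/Γ_m-invariant probability measure on Z_m with density φ := dμ/dν_m. Then for every σ̄ ∈ Γ/Γ_m, ∫_{Z_m} (π_{o,σ̄o} √φ)² dν_m ≤ ( 8 d(o,σ̄o)² / (c₀ [Γ:Γ_m]) ) · I_m(μ), where d is graph distance in X_m. -/

import Mathlib

open Filter Pointwise

namespace Tower

variable {Γ : Type} [Group Γ] [DecidableEq Γ]

/-- The ball of radius `n` about the identity in the Cayley graph of `(Γ, S)`, as a `Finset`:
products of at most `n` elements of `S`. -/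
def ballF (S : Finset Γ) : ℕ → Finset Γ
  | 0 => {1}
  | n + 1 => ballF S n ∪ ballF S n * S

lemma one_mem_ballF (S : Finset Γ) (n : ℕ) : (1 : Γ) ∈ ballF S n := by
  induction n with
  | zero => simp [ballF]
  | succ n ih => exact Finset.mem_union_left _ ih

/-- The word norm of `x` with respect to `S`. -/
noncomputable def wordNorm (S : Finset Γ) (x : Γ) : ℕ := sInf {n | x ∈ ballF S n}

/-- `(F i)` is a Følner sequence for `(Γ, S)`. -/
def IsFolner (S : Finset Γ) (F : ℕ → Finset Γ) : Prop :=
  (∀ i, (F i).Nonempty) ∧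
    Tendsto (fun i => (((F i * S) \ F i).card : ℝ) / (F i).card) atTop (nhds 0)

/-- `b(K)`: the largest `i` such that `F i` is contained in the ball of radius `K` about `o`. -/
noncomputable def bFol (S : Finset Γ) (F : ℕ → Finset Γ) (K : ℝ) : ℕ :=
  sSup {i | ∀ x ∈ F i, (wordNorm S x : ℝ) ≤ K}

/-- Exchange the values of a configuration at two coordinates. -/
def exch {α : Type} [DecidableEq α] (x y : α) (η : α → Bool) : α → Bool :=
  fun z => if z = x then η y else if z = y then η x else η z

/-- Exchange of values at two coordinates, on configurations restricted to a `Finset`. -/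
def exchOn {α : Type} [DecidableEq α] (A : Finset α) (x y : α)
    (ζ : {a // a ∈ A} → Bool) : {a // a ∈ A} → Bool :=
  fun z => if (z : α) = x then (if h : y ∈ A then ζ ⟨y, h⟩ else ζ z)
    else if (z : α) = y then (if h : x ∈ A then ζ ⟨x, h⟩ else ζ z) else ζ z

/-- The type of generators. -/
abbrev Gen (S : Finset Γ) : Type _ := {s : Γ // s ∈ S}

/-- A `Γ`-invariant local function bundle for vertices `f : V × Z → ℝ` on the Cayley graph
`X = (V, E)` of `(Γ, S)`, `V = Γ`, `Z = {0,1}^V`. -/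
structure LocalBundleV (S : Finset Γ) : Type _ where
  f : Γ → (Γ → Bool) → ℝ
  r : ℕ
  localized : ∀ (x : Γ) (η η' : Γ → Bool),
    (∀ z ∈ (ballF S r).image (x * ·), η z = η' z) → f x η = f x η'
  invariant : ∀ (σ x : Γ) (η : Γ → Bool), f (σ * x) (fun z => η (σ⁻¹ * z)) = f x η

/-- A jump rate: a symmetric, non-degenerate `Γ`-invariant local function bundle for edges,
an edge being encoded as a pair `(x, s) : Γ × Gen S` with origin `x` and terminus `x * s`. -/
structure JumpRate (S : Finset Γ) : Type _ where
  c : Γ → Gen S → (Γ → Bool) → ℝ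
  c₀ : ℝ
  c₀_pos : 0 < c₀
  nondeg : ∀ x s η, c₀ ≤ c x s η
  r : ℕ
  localized : ∀ (x : Γ) (s : Gen S) (η η' : Γ → Bool),
    (∀ z ∈ (ballF S r).image (x * ·) ∪ (ballF S r).image (x * (s : Γ) * ·), η z = η' z) →
      c x s η = c x s η'
  invariant : ∀ (σ x : Γ) (s : Gen S) (η : Γ → Bool),
    c (σ * x) s (fun z => η (σ⁻¹ * z)) = c x s η
  symm_rev : ∀ (x : Γ) (s : Gen S) (h : (s : Γ)⁻¹ ∈ S) (η : Γ → Bool),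
    c (x * (s : Γ)) ⟨(s : Γ)⁻¹, h⟩ η = c x s η
  symm_exch : ∀ (x : Γ) (s : Gen S) (η : Γ → Bool),
    c x s (exch x (x * (s : Γ)) η) = c x s η

/-- `ρ`-Bernoulli weight on `{0,1}`. -/
def bw (ρ : ℝ) (b : Bool) : ℝ := if b then ρ else 1 - ρ

/-- Expectation with respect to the `ρ`-Bernoulli product measure `ν_ρ` of a cylinder function
depending only on the coordinates in the finite set `A`. -/
noncomputable def expCyl (ρ : ℝ) (A : Finset Γ) (g : (Γ → Bool) → ℝ) : ℝ :=
  ∑ ζ : ({a // a ∈ A} → Bool),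
    (∏ a : {a // a ∈ A}, bw ρ (ζ a)) *
      g (fun z => if h : z ∈ A then ζ ⟨z, h⟩ else false)

/-- The global average `⟨f_o⟩(ρ) = E_{ν_ρ}[f_o]`. -/
noncomputable def globalAvg {S : Finset Γ} (f : LocalBundleV S) (ρ : ℝ) : ℝ :=
  expCyl ρ (ballF S f.r) (f.f 1)

section Quot

variable (N : Subgroup Γ)

/-- The configuration space `Z_m = {0,1}^{V_m}` over the quotient graph `X_m = Γ_m \ X`. -/
abbrev Conf (N : Subgroup Γ) : Type _ := (Γ ⧸ N) → Bool

/-- The `Γ_m`-periodic extension of a configuration on `X_m` to `X`. -/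
def liftZ (η : Conf N) : Γ → Bool := fun x => η (QuotientGroup.mk x)

/-- The function on `V_m × Z_m` induced by a local function bundle. -/
noncomputable def fQ {S : Finset Γ} (f : LocalBundleV S) (v : Γ ⧸ N) (η : Conf N) : ℝ :=
  f.f (Quotient.out v) (liftZ N η)

/-- The jump rate induced on the quotient graph, on the edge `(v, v * s)`. -/
noncomputable def cQ {S : Finset Γ} (c : JumpRate S) (v : Γ ⧸ N) (s : Gen S) (η : Conf N) : ℝ :=
  c.c (Quotient.out v) s (liftZ N η)

variable [N.Normal]

/-- `η^e` on the quotient, for the edge `e = (v, v * s)`. -/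
def exchQ [DecidableEq (Γ ⧸ N)] (v : Γ ⧸ N) (s : Γ) (η : Conf N) : Conf N :=
  exch v (v * QuotientGroup.mk s) η

/-- The graph distance on the quotient graph `X_m`. -/
noncomputable def distQ (S : Finset Γ) (v w : Γ ⧸ N) : ℕ :=
  sInf {n | ∃ x ∈ ballF S n, v * QuotientGroup.mk x = w}

/-- The diameter of the quotient graph `X_m`. -/
noncomputable def diamQ (S : Finset Γ) : ℕ :=
  sSup {k | ∃ v w : Γ ⧸ N, distQ N S v w = k}

variable [Fintype (Γ ⧸ N)] [DecidableEq (Γ ⧸ N)]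

/-- `μ` is a probability measure on the finite configuration space `Z_m`. -/
def IsProb (μ : Conf N → ℝ) : Prop := (∀ η, 0 ≤ μ η) ∧ ∑ η, μ η = 1

/-- The action of `Γ/Γ_m` on `Z_m`. -/
def actQ (σ : Γ ⧸ N) (η : Conf N) : Conf N := fun z => η (σ⁻¹ * z)

/-- `μ` is `Γ/Γ_m`-invariant. -/
def IsInvariant (μ : Conf N → ℝ) : Prop := ∀ σ η, μ (actQ N σ η) = μ η

/-- The uniform ((1/2)-Bernoulli) measure `ν_m` on `Z_m`. -/
noncomputable def nuU : Conf N → ℝ := fun _ => (Fintype.card (Conf N) : ℝ)⁻¹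

/-- The density `φ = dμ/dν_m`. -/
noncomputable def dens (μ : Conf N → ℝ) : Conf N → ℝ :=
  fun η => (Fintype.card (Conf N) : ℝ) * μ η

/-- `√φ` where `φ = dμ/dν_m`. -/
noncomputable def sqrtDens (μ : Conf N → ℝ) : Conf N → ℝ :=
  fun η => Real.sqrt (dens N μ η)

/-- Expectation with respect to a probability measure on `Z_m`. -/
noncomputable def Emeas (μ : Conf N → ℝ) (g : Conf N → ℝ) : ℝ := ∑ η, μ η * g η

/-- The generator `L_m F (η) = Σ_{e ∈ E_m} c(e,η) (F(η^e) - F(η))`. -/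
noncomputable def Lgen {S : Finset Γ} (c : JumpRate S) (F : Conf N → ℝ) (η : Conf N) : ℝ :=
  ∑ e : (Γ ⧸ N) × Gen S, cQ N c e.1 e.2 η * (F (exchQ N e.1 (e.2 : Γ) η) - F η)

/-- The Dirichlet form `I_m(μ) = -∫ √φ L_m √φ dν_m`. -/
noncomputable def ImGen {S : Finset Γ} (c : JumpRate S) (μ : Conf N → ℝ) : ℝ :=
  - ∑ η, nuU N η * (sqrtDens N μ η * Lgen N c (sqrtDens N μ) η)

/-- The Dirichlet form in sum form:
`I_m(μ) = (1/2) Σ_{e ∈ E_m} ∫ c(e,η) (π_e √φ)² dν_m`. -/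
noncomputable def ImSum {S : Finset Γ} (c : JumpRate S) (μ : Conf N → ℝ) : ℝ :=
  (1 / 2) * ∑ e : (Γ ⧸ N) × Gen S, ∑ η, nuU N η *
    (cQ N c e.1 e.2 η * (sqrtDens N μ (exchQ N e.1 (e.2 : Γ) η) - sqrtDens N μ η) ^ 2)

/-- The local average `f̄_{v,i}` on the quotient, over the Følner set `Fi`. -/
noncomputable def fbarQ {S : Finset Γ} (f : LocalBundleV S) (Fi : Finset Γ) (v : Γ ⧸ N)
    (η : Conf N) : ℝ :=
  ((Fi.card : ℝ))⁻¹ * ∑ σ ∈ Fi, fQ N f (QuotientGroup.mk σ * v) η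

/-- The local particle density `η̄_{v,i}` on the quotient, over the Følner set `Fi`. -/
noncomputable def etabarQ (Fi : Finset Γ) (v : Γ ⧸ N) (η : Conf N) : ℝ :=
  ((Fi.card : ℝ))⁻¹ * ∑ σ ∈ Fi, (if η (QuotientGroup.mk σ * v) then (1 : ℝ) else 0)

/-- The image of `E⁰ = {e ∈ E : oe = o or te = o}` in `E_m`. -/
def E0Q (S : Finset Γ) : Finset ((Γ ⧸ N) × Gen S) :=
  Finset.univ.filter fun e => e.1 = 1 ∨ e.1 * QuotientGroup.mk (e.2 : Γ) = 1

/-- The marginal `μ|_Λ` on `Z_Λ = {0,1}^A` of a measure on `Z_m` (identified with its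
`Γ_m`-periodic extension). -/
noncomputable def marg (A : Finset Γ) (μ : Conf N → ℝ) (ζ : {a // a ∈ A} → Bool) : ℝ :=
  ∑ η : Conf N, if (∀ a : {a // a ∈ A}, liftZ N η (a : Γ) = ζ a) then μ η else 0

/-- The density `φ_Λ = d(μ|_Λ)/dν_Λ`. -/
noncomputable def margDens (A : Finset Γ) (μ : Conf N → ℝ) (ζ : {a // a ∈ A} → Bool) : ℝ :=
  (Fintype.card ({a // a ∈ A} → Bool) : ℝ) * marg N A μ ζ

/-- The restricted Dirichlet form
`I°_Λ(μ) = (1/2) Σ_{e ∈ E_Λ} ∫_{Z_Λ} (π_e √φ_Λ)² dν_Λ` for the subgraph `Λ = (A, Eset)`. -/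
noncomputable def IrestV {S : Finset Γ} (A : Finset Γ) (Eset : Finset (Γ × Gen S))
    (μ : Conf N → ℝ) : ℝ :=
  (1 / 2) * ∑ e ∈ Eset, ∑ ζ : ({a // a ∈ A} → Bool),
    (Fintype.card ({a // a ∈ A} → Bool) : ℝ)⁻¹ *
      (Real.sqrt (margDens N A μ (exchOn A e.1 (e.1 * (e.2 : Γ)) ζ)) -
        Real.sqrt (margDens N A μ ζ)) ^ 2

/-- The marginal on `Z_Λ × Z_Λ` of the pushforward `σ̂μ` of `μ` under `η ↦ (η, σ⁻¹η)`. -/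
noncomputable def margTwo (σ : Γ) (A : Finset Γ) (μ : Conf N → ℝ)
    (ζ ζ' : {a // a ∈ A} → Bool) : ℝ :=
  ∑ η : Conf N,
    if ((∀ a : {a // a ∈ A}, liftZ N η (a : Γ) = ζ a) ∧
        (∀ a : {a // a ∈ A}, liftZ N η (σ * (a : Γ)) = ζ' a)) then μ η else 0

/-- The density of `(σ̂μ)|_{Λ×Λ}` with respect to `ν_Λ ⊗ ν_Λ`. -/
noncomputable def margTwoDens (σ : Γ) (A : Finset Γ) (μ : Conf N → ℝ)
    (ζ ζ' : {a // a ∈ A} → Bool) : ℝ :=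
  ((Fintype.card ({a // a ∈ A} → Bool) : ℝ)) ^ 2 * margTwo N σ A μ ζ ζ'

/-- `I^{(o,o)}_{Λ×Λ}(σ̂μ) = (1/2) ∫ (π̃_{o,o} √(d(σ̂μ)|_{Λ×Λ}/d(ν_Λ⊗ν_Λ)))² d(ν_Λ⊗ν_Λ)`. -/
noncomputable def Ioo (σ : Γ) (A : Finset Γ) (h1 : (1 : Γ) ∈ A) (μ : Conf N → ℝ) : ℝ :=
  (1 / 2) * ∑ ζ : ({a // a ∈ A} → Bool), ∑ ζ' : ({a // a ∈ A} → Bool),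
    (((Fintype.card ({a // a ∈ A} → Bool) : ℝ)) ^ 2)⁻¹ *
      (Real.sqrt (margTwoDens N σ A μ (Function.update ζ ⟨1, h1⟩ (ζ' ⟨1, h1⟩))
          (Function.update ζ' ⟨1, h1⟩ (ζ ⟨1, h1⟩))) -
        Real.sqrt (margTwoDens N σ A μ ζ ζ')) ^ 2

/-- The two-block restricted Dirichlet form `I°_{Λ×Λ}(σ̂μ)`, i.e. the Dirichlet form of
`L°_Λ ⊗ 1 + 1 ⊗ L°_Λ` of the square root of the density of `(σ̂μ)|_{Λ×Λ}`. -/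
noncomputable def ItwoRest {S : Finset Γ} (σ : Γ) (A : Finset Γ) (Eset : Finset (Γ × Gen S))
    (μ : Conf N → ℝ) : ℝ :=
  (1 / 2) * ∑ e ∈ Eset, ∑ ζ : ({a // a ∈ A} → Bool), ∑ ζ' : ({a // a ∈ A} → Bool),
    (((Fintype.card ({a // a ∈ A} → Bool) : ℝ)) ^ 2)⁻¹ *
      ((Real.sqrt (margTwoDens N σ A μ (exchOn A e.1 (e.1 * (e.2 : Γ)) ζ) ζ') -
          Real.sqrt (margTwoDens N σ A μ ζ ζ')) ^ 2 +
        (Real.sqrt (margTwoDens N σ A μ ζ (exchOn A e.1 (e.1 * (e.2 : Γ)) ζ')) -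
          Real.sqrt (margTwoDens N σ A μ ζ ζ')) ^ 2)

end Quot

/-- The edge set `E_Λ` of the subgraph `Λ` spanned by the ball of radius `K`. -/
def ELam (S : Finset Γ) (K : ℕ) : Finset (Γ × Gen S) :=
  (ballF S K ×ˢ (Finset.univ : Finset (Gen S))).filter fun e => e.1 * (e.2 : Γ) ∈ ballF S K


section EDBAux

variable {Γ : Type} [Group Γ] [DecidableEq Γ]

lemma EDB_ballF_mono (S : Finset Γ) {m n : ℕ} (h : m ≤ n) : ballF S m ⊆ ballF S n := by
  induction n with
  | zero => obtain rfl : m = 0 := Nat.le_zero.mp h; exact Finset.Subset.refl _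
  | succ n ih =>
    rcases Nat.lt_or_ge m (n + 1) with h' | h'
    · exact (ih (by omega)).trans Finset.subset_union_left
    · obtain rfl : m = n + 1 := by omega
      exact Finset.Subset.refl _

lemma EDB_prod_mem_ballF (S : Finset Γ) (l : List Γ) (hl : ∀ a ∈ l, a ∈ S) :
    l.prod ∈ ballF S l.length := by
  induction l using List.reverseRecOn with
  | nil => simp [ballF]
  | append_singleton l a ih =>
    rw [List.prod_append, List.prod_singleton, List.length_append]
    simp only [List.length_singleton, ballF]
    exact Finset.mem_union_right _
      (Finset.mul_mem_mul (ih fun b hb => hl b (by simp [hb])) (hl a (by simp)))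

lemma EDB_list_mem_ballF (S : Finset Γ) (l : List Γ) (hl : ∀ a ∈ l, a ∈ S) {n : ℕ}
    (hn : l.length ≤ n) : l.prod ∈ ballF S n :=
  EDB_ballF_mono S hn (EDB_prod_mem_ballF S l hl)

lemma EDB_mem_ballF_exists_list (S : Finset Γ) :
    ∀ (n : ℕ) (x : Γ), x ∈ ballF S n →
      ∃ l : List Γ, l.length ≤ n ∧ (∀ a ∈ l, a ∈ S) ∧ l.prod = x := by
  intro n
  induction n with
  | zero =>
    intro x hx
    simp only [ballF, Finset.mem_singleton] at hx
    exact ⟨[], by simp, by simp, by simp [hx]⟩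
  | succ n ih =>
    intro x hx
    simp only [ballF] at hx
    rcases Finset.mem_union.mp hx with h | h
    · obtain ⟨l, h1, h2, h3⟩ := ih x h
      exact ⟨l, by omega, h2, h3⟩
    · obtain ⟨y, hy, s, hs, rfl⟩ := Finset.mem_mul.mp h
      obtain ⟨l, h1, h2, h3⟩ := ih y hy
      refine ⟨l ++ [s], by simp; omega, ?_, by simp [h3]⟩
      intro a ha
      rcases List.mem_append.mp ha with h | h
      · exact h2 a h
      · simp only [List.mem_singleton] at h; subst h; exact hs

lemma EDB_exists_mem_ballF (S : Finset Γ) (hS_symm : ∀ s ∈ S, s⁻¹ ∈ S)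
    (hS_gen : Subgroup.closure (S : Set Γ) = ⊤) (x : Γ) : ∃ n, x ∈ ballF S n := by
  have hx : x ∈ Subgroup.closure (S : Set Γ) := hS_gen ▸ Subgroup.mem_top x
  induction hx using Subgroup.closure_induction with
  | mem y hy => exact ⟨1, by simpa using EDB_list_mem_ballF S [y] (by simpa using hy) (by simp)⟩
  | one => exact ⟨0, by simp [ballF]⟩
  | mul y z _ _ ihy ihz =>
    obtain ⟨m, hm⟩ := ihy
    obtain ⟨n, hn⟩ := ihz
    obtain ⟨l1, h11, h12, h13⟩ := EDB_mem_ballF_exists_list S m y hm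
    obtain ⟨l2, h21, h22, h23⟩ := EDB_mem_ballF_exists_list S n z hn
    refine ⟨m + n, ?_⟩
    have := EDB_list_mem_ballF S (l1 ++ l2) ?_ (n := m + n) (by simp; omega)
    · rwa [List.prod_append, h13, h23] at this
    · intro a ha
      rcases List.mem_append.mp ha with h | h
      · exact h12 a h
      · exact h22 a h
  | inv y _ ihy =>
    obtain ⟨n, hn⟩ := ihy
    obtain ⟨l, h1, h2, h3⟩ := EDB_mem_ballF_exists_list S n y hn
    refine ⟨n, ?_⟩
    have := EDB_list_mem_ballF S ((l.map fun a => a⁻¹).reverse) ?_ (n := n) (by simpa using h1)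
    · rwa [← List.prod_inv_reverse, h3] at this
    · intro a ha
      simp only [List.mem_reverse, List.mem_map] at ha
      obtain ⟨b, hb, rfl⟩ := ha
      exact hS_symm b (h2 b hb)


end EDBAux

section EDBExch

variable {α : Type} [DecidableEq α]


lemma EDB_exch_self (x : α) (η : α → Bool) : exch x x η = η := by
  funext z; simp only [exch]; split_ifs with h <;> simp [h]

lemma EDB_exch_exch (x y : α) (η : α → Bool) : exch x y (exch x y η) = η := by
  funext z; simp only [exch]; split_ifs <;> simp_all

lemma EDB_exch_bijective (x y : α) : Function.Bijective (exch x y) :=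
  Function.Involutive.bijective (EDB_exch_exch x y)

lemma EDB_exch_triple {x y z : α} (hxy : x ≠ y) (hyz : y ≠ z) (hxz : x ≠ z) (η : α → Bool) :
    exch x y (exch y z (exch x y η)) = exch x z η := by
  funext w; simp only [exch]; split_ifs <;> simp_all

def applyEx (L : List (α × α)) (η : α → Bool) : α → Bool :=
  L.foldl (fun η e => exch e.1 e.2 η) η

@[simp] lemma EDB_applyEx_nil (η : α → Bool) : applyEx [] η = η := rfl

lemma EDB_applyEx_cons (e : α × α) (L : List (α × α)) (η : α → Bool) :
    applyEx (e :: L) η = applyEx L (exch e.1 e.2 η) := rfl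

lemma EDB_applyEx_append (L₁ L₂ : List (α × α)) (η : α → Bool) :
    applyEx (L₁ ++ L₂) η = applyEx L₂ (applyEx L₁ η) :=
  List.foldl_append

@[simp] lemma EDB_applyEx_singleton (e : α × α) (η : α → Bool) :
    applyEx [e] η = exch e.1 e.2 η := rfl

lemma EDB_applyEx_bijective (L : List (α × α)) : Function.Bijective (applyEx L) := by
  induction L with
  | nil => exact Function.bijective_id
  | cons e L ih =>
    have : applyEx (e :: L) = (applyEx L) ∘ (exch e.1 e.2) := rfl
    rw [this]
    exact ih.comp (EDB_exch_bijective e.1 e.2)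

def seqEx (v : ℕ → α) : ℕ → List (α × α)
  | 0 => []
  | 1 => [(v 0, v 1)]
  | (k + 2) => (v 0, v 1) :: (seqEx (fun i => v (i + 1)) (k + 1) ++ [(v 0, v 1)])

lemma EDB_seqEx_length : ∀ (k : ℕ) (v : ℕ → α), (seqEx v (k + 1)).length = 2 * k + 1
  | 0, v => rfl
  | (k + 1), v => by
    have h := EDB_seqEx_length k (fun i => v (i + 1))
    simp only [seqEx, List.length_cons, List.length_append, h, List.length_singleton,
      List.length_nil]
    omega

lemma EDB_seqEx_mem : ∀ (k : ℕ) (v : ℕ → α) (e : α × α), e ∈ seqEx v k →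
    ∃ i, i < k ∧ e = (v i, v (i + 1))
  | 0, v, e, h => by simp [seqEx] at h
  | 1, v, e, h => by
    simp only [seqEx, List.mem_singleton] at h
    exact ⟨0, by omega, h⟩
  | (k + 2), v, e, h => by
    simp only [seqEx, List.mem_cons, List.mem_append, List.mem_singleton,
      List.not_mem_nil, or_false] at h
    rcases h with h | h | h
    · exact ⟨0, by omega, h⟩
    · obtain ⟨i, hi, he⟩ := EDB_seqEx_mem (k + 1) (fun i => v (i + 1)) e h
      exact ⟨i + 1, by omega, he⟩
    · exact ⟨0, by omega, h⟩

lemma EDB_applyEx_seqEx : ∀ (k : ℕ) (v : ℕ → α)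
    (_ : ∀ i j, i ≤ k + 1 → j ≤ k + 1 → i ≠ j → v i ≠ v j) (η : α → Bool),
    applyEx (seqEx v (k + 1)) η = exch (v 0) (v (k + 1)) η
  | 0, v, _, η => by simp [seqEx]
  | (k + 1), v, hinj, η => by
    have mid := EDB_applyEx_seqEx k (fun i => v (i + 1))
      (fun i j hi hj hij => hinj (i + 1) (j + 1) (by omega) (by omega) (by omega))
      (exch (v 0) (v 1) η)
    show applyEx ((v 0, v 1) :: (seqEx (fun i => v (i + 1)) (k + 1) ++ [(v 0, v 1)])) η = _
    rw [EDB_applyEx_cons, EDB_applyEx_append, mid, EDB_applyEx_singleton]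
    exact EDB_exch_triple (hinj 0 1 (by omega) (by omega) (by omega))
      (hinj 1 (k + 2) (by omega) (by omega) (by omega))
      (hinj 0 (k + 2) (by omega) (by omega) (by omega)) η

lemma EDB_sq_sum_le {ι : Type*} (s : Finset ι) (f : ι → ℝ) :
    (∑ i ∈ s, f i) ^ 2 ≤ (s.card : ℝ) * ∑ i ∈ s, (f i) ^ 2 := by
  have h := Finset.sum_mul_sq_le_sq_mul_sq s (fun _ => (1 : ℝ)) f
  simpa using h



lemma EDB_applyEx_seqEx' (k : ℕ) (hk : 1 ≤ k) (v : ℕ → α)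
    (hinj : ∀ i j, i ≤ k → j ≤ k → i ≠ j → v i ≠ v j) (η : α → Bool) :
    applyEx (seqEx v k) η = exch (v 0) (v k) η := by
  obtain ⟨k', rfl⟩ : ∃ k', k = k' + 1 := ⟨k - 1, by omega⟩
  exact EDB_applyEx_seqEx k' v hinj η

lemma EDB_seqEx_length' (k : ℕ) (hk : 1 ≤ k) (v : ℕ → α) :
    (seqEx v k).length = 2 * k - 1 := by
  obtain ⟨k', rfl⟩ : ∃ k', k = k' + 1 := ⟨k - 1, by omega⟩
  rw [EDB_seqEx_length]
  omega

end EDBExch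

section EDBMeasure

variable {Γ : Type} [Group Γ] [DecidableEq Γ]
variable (N : Subgroup Γ) [N.Normal] [Fintype (Γ ⧸ N)] [DecidableEq (Γ ⧸ N)]

lemma EDB_nuU_nonneg (η : Conf N) : 0 ≤ nuU N η := inv_nonneg.mpr (Nat.cast_nonneg _)

/-- The single-exchange Dirichlet quantity `∫ (π_{a,b} √φ)² dν_m`. -/
noncomputable def EDB_D (μ : Conf N → ℝ) (a b : Γ ⧸ N) : ℝ :=
  ∑ η, nuU N η * (sqrtDens N μ (exch a b η) - sqrtDens N μ η) ^ 2

lemma EDB_actQ_bij (τ : Γ ⧸ N) : Function.Bijective (actQ N τ) := by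
  refine Function.bijective_iff_has_inverse.mpr ⟨actQ N τ⁻¹, fun η => ?_, fun η => ?_⟩ <;>
    · funext z
      simp [actQ, inv_mul_cancel_left, mul_inv_cancel_left, ← mul_assoc]

lemma EDB_exch_actQ (τ a b : Γ ⧸ N) (η : Conf N) :
    exch (τ * a) (τ * b) (actQ N τ η) = actQ N τ (exch a b η) := by
  funext z
  have e1 : (z = τ * a) ↔ (τ⁻¹ * z = a) :=
    ⟨fun h => by rw [h, inv_mul_cancel_left], fun h => by rw [← h, mul_inv_cancel_left]⟩
  have e2 : (z = τ * b) ↔ (τ⁻¹ * z = b) :=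
    ⟨fun h => by rw [h, inv_mul_cancel_left], fun h => by rw [← h, mul_inv_cancel_left]⟩
  simp only [exch, actQ, e1, e2, inv_mul_cancel_left]

lemma EDB_sqrtDens_actQ (μ : Conf N → ℝ) (hinv : IsInvariant N μ) (τ : Γ ⧸ N) (η : Conf N) :
    sqrtDens N μ (actQ N τ η) = sqrtDens N μ η := by
  simp only [sqrtDens, dens, hinv τ η]

lemma EDB_D_translate (μ : Conf N → ℝ) (hinv : IsInvariant N μ) (τ a b : Γ ⧸ N) :
    EDB_D N μ (τ * a) (τ * b) = EDB_D N μ a b := by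
  refine (Fintype.sum_bijective (actQ N τ) (EDB_actQ_bij N τ)
    (fun η => nuU N η * (sqrtDens N μ (exch a b η) - sqrtDens N μ η) ^ 2)
    (fun η => nuU N η * (sqrtDens N μ (exch (τ * a) (τ * b) η) - sqrtDens N μ η) ^ 2)
    (fun η => ?_)).symm
  rw [EDB_exch_actQ, EDB_sqrtDens_actQ N μ hinv τ (exch a b η), EDB_sqrtDens_actQ N μ hinv τ η]
  rfl

lemma EDB_chain (μ : Conf N → ℝ) (L : List ((Γ ⧸ N) × (Γ ⧸ N))) (B : ℝ) (hB0 : 0 ≤ B)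
    (hB : ∀ e ∈ L, EDB_D N μ e.1 e.2 ≤ B) :
    ∑ η, nuU N η * (sqrtDens N μ (applyEx L η) - sqrtDens N μ η) ^ 2 ≤
      (L.length : ℝ) ^ 2 * B := by
  have hnu := EDB_nuU_nonneg N
  have tele : ∀ η : Conf N, sqrtDens N μ (applyEx L η) - sqrtDens N μ η
      = ∑ i ∈ Finset.range L.length, (sqrtDens N μ (applyEx (L.take (i + 1)) η) -
          sqrtDens N μ (applyEx (L.take i) η)) := by
    intro η
    rw [Finset.sum_range_sub (fun i => sqrtDens N μ (applyEx (L.take i) η)) L.length,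
      List.take_length]
    simp
  have hper : ∀ i ∈ Finset.range L.length,
      ∑ η, nuU N η * (sqrtDens N μ (applyEx (L.take (i + 1)) η) -
        sqrtDens N μ (applyEx (L.take i) η)) ^ 2 ≤ B := by
    intro i hi
    have hi' : i < L.length := Finset.mem_range.mp hi
    have htake : L.take (i + 1) = L.take i ++ [L[i]'hi'] := by
      rw [List.take_succ, List.getElem?_eq_getElem hi']; rfl
    have heq : ∑ η, nuU N η * (sqrtDens N μ (applyEx (L.take (i + 1)) η) -
        sqrtDens N μ (applyEx (L.take i) η)) ^ 2 = EDB_D N μ (L[i]'hi').1 (L[i]'hi').2 := by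
      refine Fintype.sum_bijective (applyEx (L.take i)) (EDB_applyEx_bijective _) _ _
        (fun η => ?_)
      rw [htake, EDB_applyEx_append, EDB_applyEx_singleton]
      rfl
    rw [heq]
    exact hB _ (List.getElem_mem hi')
  calc ∑ η, nuU N η * (sqrtDens N μ (applyEx L η) - sqrtDens N μ η) ^ 2
      = ∑ η, nuU N η * (∑ i ∈ Finset.range L.length,
          (sqrtDens N μ (applyEx (L.take (i + 1)) η) -
            sqrtDens N μ (applyEx (L.take i) η))) ^ 2 :=
        Finset.sum_congr rfl fun η _ => by rw [tele η]
    _ ≤ ∑ η, ∑ i ∈ Finset.range L.length, (L.length : ℝ) *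
          (nuU N η * (sqrtDens N μ (applyEx (L.take (i + 1)) η) -
            sqrtDens N μ (applyEx (L.take i) η)) ^ 2) := by
        refine Finset.sum_le_sum fun η _ => ?_
        have hcs := EDB_sq_sum_le (Finset.range L.length)
          (fun i => sqrtDens N μ (applyEx (L.take (i + 1)) η) -
            sqrtDens N μ (applyEx (L.take i) η))
        rw [Finset.card_range] at hcs
        calc nuU N η * (∑ i ∈ Finset.range L.length,
              (sqrtDens N μ (applyEx (L.take (i + 1)) η) -
                sqrtDens N μ (applyEx (L.take i) η))) ^ 2
            ≤ nuU N η * ((L.length : ℝ) * ∑ i ∈ Finset.range L.length,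
              (sqrtDens N μ (applyEx (L.take (i + 1)) η) -
                sqrtDens N μ (applyEx (L.take i) η)) ^ 2) :=
              mul_le_mul_of_nonneg_left hcs (hnu η)
          _ = ∑ i ∈ Finset.range L.length, (L.length : ℝ) *
              (nuU N η * (sqrtDens N μ (applyEx (L.take (i + 1)) η) -
                sqrtDens N μ (applyEx (L.take i) η)) ^ 2) := by
              rw [Finset.mul_sum, Finset.mul_sum]
              exact Finset.sum_congr rfl fun i _ => by ring
    _ = ∑ i ∈ Finset.range L.length, ∑ η, (L.length : ℝ) *
          (nuU N η * (sqrtDens N μ (applyEx (L.take (i + 1)) η) -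
            sqrtDens N μ (applyEx (L.take i) η)) ^ 2) := Finset.sum_comm
    _ ≤ ∑ _i ∈ Finset.range L.length, (L.length : ℝ) * B := by
        refine Finset.sum_le_sum fun i hi => ?_
        rw [← Finset.mul_sum]
        exact mul_le_mul_of_nonneg_left (hper i hi) (Nat.cast_nonneg _)
    _ = (L.length : ℝ) ^ 2 * B := by
        rw [Finset.sum_const, Finset.card_range, nsmul_eq_mul]
        ring

variable (S : Finset Γ)

/-- The edge summand of the Dirichlet form. -/
noncomputable def EDB_J (c : JumpRate S) (μ : Conf N → ℝ) (e : (Γ ⧸ N) × Gen S) : ℝ :=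
  ∑ η, nuU N η *
    (cQ N c e.1 e.2 η * (sqrtDens N μ (exchQ N e.1 (e.2 : Γ) η) - sqrtDens N μ η) ^ 2)

lemma EDB_ImSum_eq (c : JumpRate S) (μ : Conf N → ℝ) :
    ImSum N c μ = (1 / 2) * ∑ e : (Γ ⧸ N) × Gen S, EDB_J N S c μ e := rfl

lemma EDB_J_nonneg (c : JumpRate S) (μ : Conf N → ℝ) (hμ : ∀ η, 0 ≤ μ η)
    (e : (Γ ⧸ N) × Gen S) : 0 ≤ EDB_J N S c μ e := by
  refine Finset.sum_nonneg fun η _ => ?_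
  have hc : (0 : ℝ) ≤ cQ N c e.1 e.2 η := le_trans c.c₀_pos.le (c.nondeg _ _ _)
  exact mul_nonneg (EDB_nuU_nonneg N η) (mul_nonneg hc (sq_nonneg _))

lemma EDB_ImSum_nonneg (c : JumpRate S) (μ : Conf N → ℝ) (hμ : ∀ η, 0 ≤ μ η) :
    0 ≤ ImSum N c μ := by
  rw [EDB_ImSum_eq]
  exact mul_nonneg (by norm_num) (Finset.sum_nonneg fun e _ => EDB_J_nonneg N S c μ hμ e)

lemma EDB_edge_bound (c : JumpRate S) (μ : Conf N → ℝ) (hμ : ∀ η, 0 ≤ μ η)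
    (hinv : IsInvariant N μ) (a : Γ ⧸ N) (s : Gen S) :
    EDB_D N μ a (a * QuotientGroup.mk (s : Γ)) ≤
      2 / (c.c₀ * (Fintype.card (Γ ⧸ N) : ℝ)) * ImSum N c μ := by
  haveI : Nonempty (Γ ⧸ N) := ⟨1⟩
  have hK : (0 : ℝ) < (Fintype.card (Γ ⧸ N) : ℝ) := by exact_mod_cast Fintype.card_pos
  have hc0 := c.c₀_pos
  have htrans : ∀ v : Γ ⧸ N, EDB_D N μ v (v * QuotientGroup.mk (s : Γ)) =
      EDB_D N μ a (a * QuotientGroup.mk (s : Γ)) := by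
    intro v
    have h := EDB_D_translate N μ hinv (v * a⁻¹) a (a * QuotientGroup.mk (s : Γ))
    rwa [← mul_assoc, inv_mul_cancel_right] at h
  have hDJ : ∀ v : Γ ⧸ N, c.c₀ * EDB_D N μ v (v * QuotientGroup.mk (s : Γ)) ≤
      EDB_J N S c μ (v, s) := by
    intro v
    rw [EDB_D, Finset.mul_sum]
    simp only [EDB_J, exchQ]
    refine Finset.sum_le_sum fun η _ => ?_
    have hc : c.c₀ ≤ cQ N c v s η := c.nondeg _ _ _
    calc c.c₀ * (nuU N η *
          (sqrtDens N μ (exch v (v * QuotientGroup.mk (s : Γ)) η) - sqrtDens N μ η) ^ 2)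
        = nuU N η * (c.c₀ *
          (sqrtDens N μ (exch v (v * QuotientGroup.mk (s : Γ)) η) - sqrtDens N μ η) ^ 2) := by
          ring
      _ ≤ nuU N η * (cQ N c v s η *
          (sqrtDens N μ (exch v (v * QuotientGroup.mk (s : Γ)) η) - sqrtDens N μ η) ^ 2) :=
          mul_le_mul_of_nonneg_left (mul_le_mul_of_nonneg_right hc (sq_nonneg _))
            (EDB_nuU_nonneg N η)
  have hJsum : ∑ v : Γ ⧸ N, EDB_J N S c μ (v, s) ≤ 2 * ImSum N c μ := by
    have h1 : (2 : ℝ) * ImSum N c μ = ∑ v : Γ ⧸ N, ∑ t : Gen S, EDB_J N S c μ (v, t) := by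
      rw [EDB_ImSum_eq, Fintype.sum_prod_type]
      ring
    rw [h1]
    exact Finset.sum_le_sum fun v _ =>
      Finset.single_le_sum (fun t _ => EDB_J_nonneg N S c μ hμ (v, t)) (Finset.mem_univ s)
  have hKD : (Fintype.card (Γ ⧸ N) : ℝ) * EDB_D N μ a (a * QuotientGroup.mk (s : Γ)) =
      ∑ v : Γ ⧸ N, EDB_D N μ v (v * QuotientGroup.mk (s : Γ)) := by
    calc (Fintype.card (Γ ⧸ N) : ℝ) * EDB_D N μ a (a * QuotientGroup.mk (s : Γ))
        = ∑ _v : Γ ⧸ N, EDB_D N μ a (a * QuotientGroup.mk (s : Γ)) := by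
          rw [Finset.sum_const, Finset.card_univ, nsmul_eq_mul]
      _ = ∑ v : Γ ⧸ N, EDB_D N μ v (v * QuotientGroup.mk (s : Γ)) :=
          (Finset.sum_congr rfl fun v _ => htrans v).symm
  have hfinal : c.c₀ * ((Fintype.card (Γ ⧸ N) : ℝ) *
      EDB_D N μ a (a * QuotientGroup.mk (s : Γ))) ≤ 2 * ImSum N c μ := by
    rw [hKD, Finset.mul_sum]
    exact le_trans (Finset.sum_le_sum fun v _ => hDJ v) hJsum
  have h2 : 2 / (c.c₀ * (Fintype.card (Γ ⧸ N) : ℝ)) * ImSum N c μ =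
      2 * ImSum N c μ / (c.c₀ * (Fintype.card (Γ ⧸ N) : ℝ)) := by ring
  rw [h2, le_div_iff₀ (by positivity)]
  calc EDB_D N μ a (a * QuotientGroup.mk (s : Γ)) * (c.c₀ * (Fintype.card (Γ ⧸ N) : ℝ))
      = c.c₀ * ((Fintype.card (Γ ⧸ N) : ℝ) * EDB_D N μ a (a * QuotientGroup.mk (s : Γ))) := by
        ring
    _ ≤ 2 * ImSum N c μ := hfinal

end EDBMeasure

/-- **Exchange Dirichlet bound for invariant measures** (corollary of Lemma 3.4 and
identity (eq)): for a `Γ/Γ_m`-invariant probability measure `μ` on `Z_m`,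
`∫ (π_{o,σ̄o} √φ)² dν_m ≤ (8 d(o,σ̄o)² / (c₀ [Γ:Γ_m])) I_m(μ)`. -/
theorem exchange_dirichlet_bound {Γ : Type} [Group Γ] [DecidableEq Γ] [Infinite Γ]
    (S : Finset Γ) (hS_symm : ∀ s ∈ S, s⁻¹ ∈ S)
    (hS_gen : Subgroup.closure (S : Set Γ) = ⊤)
    (N : Subgroup Γ) [N.Normal] [N.FiniteIndex]
    [Fintype (Γ ⧸ N)] [DecidableEq (Γ ⧸ N)]
    (c : JumpRate S) (μ : Conf N → ℝ) (hμ : IsProb N μ) (hinv : IsInvariant N μ)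
    (σ : Γ ⧸ N) :
    ∑ η, nuU N η * (sqrtDens N μ (exch (1 : Γ ⧸ N) σ η) - sqrtDens N μ η) ^ 2 ≤
      8 * ((distQ N S 1 σ : ℝ)) ^ 2 / (c.c₀ * (N.index : ℝ)) * ImSum N c μ := by
  classical
  haveI : Nonempty (Γ ⧸ N) := ⟨1⟩
  have hμ0 : ∀ η, 0 ≤ μ η := hμ.1
  have hI0 : 0 ≤ ImSum N c μ := EDB_ImSum_nonneg N S c μ hμ0
  have hc0 := c.c₀_pos
  have hK : (0 : ℝ) < (Fintype.card (Γ ⧸ N) : ℝ) := by exact_mod_cast Fintype.card_pos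
  have hidxn : N.index = Fintype.card (Γ ⧸ N) := by
    rw [show N.index = Nat.card (Γ ⧸ N) from rfl, Nat.card_eq_fintype_card]
  have hidx : (N.index : ℝ) = (Fintype.card (Γ ⧸ N) : ℝ) := by rw [hidxn]
  set B : ℝ := 2 / (c.c₀ * (Fintype.card (Γ ⧸ N) : ℝ)) * ImSum N c μ with hB
  have hB0 : 0 ≤ B := by
    rw [hB]
    exact mul_nonneg (div_nonneg (by norm_num) (mul_nonneg hc0.le hK.le)) hI0
  -- the distance is realized by a word in the generators
  obtain ⟨γ, hγ⟩ := QuotientGroup.mk_surjective (s := N) σ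
  have hne : {n : ℕ | ∃ x ∈ ballF S n, (1 : Γ ⧸ N) * QuotientGroup.mk x = σ}.Nonempty := by
    obtain ⟨n, hn⟩ := EDB_exists_mem_ballF S hS_symm hS_gen γ
    exact ⟨n, γ, hn, by rw [one_mul, hγ]⟩
  have hdmem : ∃ x ∈ ballF S (distQ N S 1 σ), (1 : Γ ⧸ N) * QuotientGroup.mk x = σ :=
    Nat.sInf_mem hne
  obtain ⟨x, hxball, hxσ⟩ := hdmem
  have hσ : QuotientGroup.mk x = σ := by rw [← hxσ, one_mul]
  obtain ⟨l, hlen, hlS, hlprod⟩ := EDB_mem_ballF_exists_list S (distQ N S 1 σ) x hxball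
  by_cases hl : l = []
  · -- then σ = 1 and the left-hand side vanishes
    have hσ1 : σ = 1 := by
      rw [← hσ, ← hlprod, hl]
      simp
    subst hσ1
    have hz : ∀ η : Conf N, exch (1 : Γ ⧸ N) 1 η = η := fun η => EDB_exch_self 1 η
    have : ∑ η, nuU N η * (sqrtDens N μ (exch (1 : Γ ⧸ N) 1 η) - sqrtDens N μ η) ^ 2 = 0 := by
      refine Finset.sum_eq_zero fun η _ => ?_
      rw [hz η]
      ring
    rw [this]
    exact mul_nonneg (div_nonneg (by positivity) (mul_nonneg hc0.le (Nat.cast_nonneg _))) hI0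
  · have hk1 : 1 ≤ l.length := List.length_pos_iff.mpr hl
    have hkd : l.length ≤ distQ N S 1 σ := hlen
    set v : ℕ → Γ ⧸ N := fun i => QuotientGroup.mk ((l.take i).prod) with hv
    have hv0 : v 0 = 1 := by rw [hv]; simp
    have hvk : v l.length = σ := by
      rw [hv]
      simp only [List.take_length]
      rw [hlprod, hσ]
    -- injectivity of the geodesic path
    have haux : ∀ i j, i < j → j ≤ l.length → v i ≠ v j := by
      intro i j hij hjk heq
      have hdle : distQ N S 1 σ ≤ i + (l.length - j) := by
        apply Nat.sInf_le
        refine ⟨(l.take i ++ l.drop j).prod, ?_, ?_⟩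
        · have hmem := EDB_prod_mem_ballF S (l.take i ++ l.drop j) ?_
          · rwa [List.length_append, List.length_take, List.length_drop,
              min_eq_left (by omega)] at hmem
          · intro a ha
            rcases List.mem_append.mp ha with h | h
            · exact hlS a (List.mem_of_mem_take h)
            · exact hlS a (List.mem_of_mem_drop h)
        · rw [one_mul]
          calc QuotientGroup.mk ((l.take i ++ l.drop j).prod)
              = v i * QuotientGroup.mk ((l.drop j).prod) := by
                rw [List.prod_append, QuotientGroup.mk_mul, hv]
            _ = v j * QuotientGroup.mk ((l.drop j).prod) := by rw [heq]
            _ = QuotientGroup.mk ((l.take j).prod * (l.drop j).prod) := by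
                rw [QuotientGroup.mk_mul, hv]
            _ = σ := by rw [← List.prod_append, List.take_append_drop, hlprod, hσ]
      omega
    have hinj : ∀ i j, i ≤ l.length → j ≤ l.length → i ≠ j → v i ≠ v j := by
      intro i j hi hj hij
      rcases Nat.lt_or_ge i j with h | h
      · exact haux i j h hj
      · intro heq
        exact haux j i (by omega) hi heq.symm
    -- every edge of the exchange sequence satisfies the uniform bound
    have hedges : ∀ e ∈ seqEx v l.length, EDB_D N μ e.1 e.2 ≤ B := by
      intro e he
      obtain ⟨i, hik, rfl⟩ := EDB_seqEx_mem l.length v e he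
      have hstep : v (i + 1) = v i * QuotientGroup.mk (l[i]'hik) := by
        rw [hv]
        dsimp only
        rw [List.prod_take_succ l i hik, QuotientGroup.mk_mul]
      have hmem : l[i]'hik ∈ S := hlS _ (List.getElem_mem hik)
      show EDB_D N μ (v i) (v (i + 1)) ≤ B
      rw [hstep, hB]
      exact EDB_edge_bound N S c μ hμ0 hinv (v i) ⟨l[i]'hik, hmem⟩
    have hid : ∀ η : Conf N, exch (1 : Γ ⧸ N) σ η = applyEx (seqEx v l.length) η := by
      intro η
      rw [EDB_applyEx_seqEx' l.length hk1 v hinj η, hv0, hvk]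
    calc ∑ η, nuU N η * (sqrtDens N μ (exch (1 : Γ ⧸ N) σ η) - sqrtDens N μ η) ^ 2
        = ∑ η, nuU N η * (sqrtDens N μ (applyEx (seqEx v l.length) η) - sqrtDens N μ η) ^ 2 :=
          Finset.sum_congr rfl fun η _ => by rw [hid η]
      _ ≤ ((seqEx v l.length).length : ℝ) ^ 2 * B := EDB_chain N μ _ B hB0 hedges
      _ ≤ (2 * (distQ N S 1 σ : ℝ)) ^ 2 * B := by
          have h1 : (seqEx v l.length).length ≤ 2 * distQ N S 1 σ := by
            rw [EDB_seqEx_length' l.length hk1 v]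
            omega
          have h2 : ((seqEx v l.length).length : ℝ) ≤ 2 * (distQ N S 1 σ : ℝ) := by
            exact_mod_cast h1
          exact mul_le_mul_of_nonneg_right (pow_le_pow_left₀ (Nat.cast_nonneg _) h2 2) hB0
      _ = 8 * ((distQ N S 1 σ : ℝ)) ^ 2 / (c.c₀ * (N.index : ℝ)) * ImSum N c μ := by
          rw [hB, hidx]
          ring

end Tower
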